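/- Let f : ℝ^n → ℝ be differentiable with ‖∇f(x)‖₂ ≤ L√n for all x, let D be a bounded denoiser with constant C ≥ 0, and fix λ > 0, ρ > 0, v, u ∈ ℝ^n. Suppose x⁺ is a global minimizer of x ↦ f(x) + (ρ/2)‖x − (v − u)‖₂² and v⁺ = D_σ(x⁺ + u) with σ = √(λ/ρ). Then ‖v⁺ − v‖₂/√n ≤ √(λC/ρ) + L/ρ. -/

import Mathlib

open Filter Topology

/-- **One-step bound on the `v`-update.**
If `x⁺` minimizes `x ↦ f(x) + (ρ/2)‖x − (v − u)‖²` and `v⁺ = D_σ(x⁺ + u)` with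
`σ = √(λ/ρ)`, then `‖v⁺ − v‖/√n ≤ √(λC/ρ) + L/ρ`. -/
theorem v_update_bound
    (n : ℕ) (hn : 1 ≤ n)
    (f : EuclideanSpace ℝ (Fin n) → ℝ) (L : ℝ)
    (hf : Differentiable ℝ f)
    (hgrad : ∀ z : EuclideanSpace ℝ (Fin n), ‖gradient f z‖ ≤ L * Real.sqrt n)
    (D : ℝ → EuclideanSpace ℝ (Fin n) → EuclideanSpace ℝ (Fin n)) (C : ℝ)
    (hC : 0 ≤ C)
    (hD : ∀ σ : ℝ, 0 < σ → ∀ z : EuclideanSpace ℝ (Fin n),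
      ‖D σ z - z‖ ^ 2 ≤ (n : ℝ) * σ ^ 2 * C)
    (lam ρ : ℝ) (hlam : 0 < lam) (hρ : 0 < ρ)
    (v u xplus vplus : EuclideanSpace ℝ (Fin n))
    (hxplus : ∀ w : EuclideanSpace ℝ (Fin n),
      f xplus + ρ / 2 * ‖xplus - (v - u)‖ ^ 2 ≤ f w + ρ / 2 * ‖w - (v - u)‖ ^ 2)
    (hvplus : vplus = D (Real.sqrt (lam / ρ)) (xplus + u)) :
    ‖vplus - v‖ / Real.sqrt n ≤ Real.sqrt (lam * C / ρ) + L / ρ := by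
  set b : EuclideanSpace ℝ (Fin n) := v - u with hb
  have hsn : (0:ℝ) < Real.sqrt n := Real.sqrt_pos.mpr (by exact_mod_cast Nat.lt_of_lt_of_le Nat.zero_lt_one hn)
  -- derivative of the objective at xplus
  have hF1 : HasFDerivAt f (InnerProductSpace.toDual ℝ  (EuclideanSpace ℝ (Fin n)) (gradient f xplus)) xplus :=
    ((hf xplus).hasGradientAt).hasFDerivAt
  have hF2 : HasFDerivAt (fun w : EuclideanSpace ℝ (Fin n) => ‖w - b‖ ^ 2)
      (2 • (innerSL ℝ (xplus - b)).comp (ContinuousLinearMap.id ℝ (EuclideanSpace ℝ (Fin n)))) xplus := by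
    simpa using ((hasFDerivAt_id xplus).sub_const b).norm_sq
  have hG : HasFDerivAt (fun w : EuclideanSpace ℝ (Fin n) => f w + ρ / 2 * ‖w - b‖ ^ 2)
      (InnerProductSpace.toDual ℝ  (EuclideanSpace ℝ (Fin n)) (gradient f xplus)
        + (ρ / 2) • (2 • (innerSL ℝ (xplus - b)).comp (ContinuousLinearMap.id ℝ (EuclideanSpace ℝ (Fin n))))) xplus :=
    hF1.add (hF2.const_smul (ρ / 2))
  have hmin : IsLocalMin (fun w : EuclideanSpace ℝ (Fin n) => f w + ρ / 2 * ‖w - b‖ ^ 2) xplus :=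
    Filter.Eventually.of_forall hxplus
  have hzero := hmin.hasFDerivAt_eq_zero hG
  -- deduce gradient f xplus + ρ • (xplus - b) = 0
  have key : gradient f xplus + ρ • (xplus - b) = 0 := by
    have h1 : ∀ h : EuclideanSpace ℝ (Fin n), inner ℝ (gradient f xplus + ρ • (xplus - b)) h = (0:ℝ) := by
      intro h
      have := congrFun (congrArg DFunLike.coe hzero) h
      simp only [ContinuousLinearMap.add_apply, ContinuousLinearMap.smul_apply,
        ContinuousLinearMap.coe_smul', Pi.smul_apply, ContinuousLinearMap.coe_comp',
        Function.comp_apply, ContinuousLinearMap.coe_id', id_eq, innerSL_apply_apply,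
        InnerProductSpace.toDual_apply_apply, ContinuousLinearMap.zero_apply, smul_eq_mul, nsmul_eq_mul, Nat.cast_ofNat] at this
      rw [inner_add_left, real_inner_smul_left]
      linarith [this]
    have := h1 (gradient f xplus + ρ • (xplus - b))
    exact inner_self_eq_zero.mp this
  have hxb : xplus - b = (-ρ⁻¹) • gradient f xplus := by
    have : ρ • (xplus - b) = -(gradient f xplus) := by
      rw [eq_neg_iff_add_eq_zero, add_comm]; exact key
    have h2 := congrArg (fun z => ρ⁻¹ • z) this
    simpa [smul_smul, inv_mul_cancel₀ hρ.ne'] using h2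
  have hnormxb : ‖xplus - b‖ ≤ L * Real.sqrt n / ρ := by
    rw [hxb, norm_smul]
    have : ‖(-ρ⁻¹ : ℝ)‖ = ρ⁻¹ := by
      rw [norm_neg, Real.norm_eq_abs, abs_of_pos (inv_pos.mpr hρ)]
    rw [this]
    calc ρ⁻¹ * ‖gradient f xplus‖ ≤ ρ⁻¹ * (L * Real.sqrt n) := by
          exact mul_le_mul_of_nonneg_left (hgrad xplus) (inv_pos.mpr hρ).le
      _ = L * Real.sqrt n / ρ := by ring
  -- denoiser bound
  have hσ : (0:ℝ) < Real.sqrt (lam / ρ) := Real.sqrt_pos.mpr (div_pos hlam hρ)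
  have hden : ‖vplus - (xplus + u)‖ ≤ Real.sqrt n * Real.sqrt (lam * C / ρ) := by
    have h3 := hD _ hσ (xplus + u)
    rw [← hvplus, Real.sq_sqrt (div_pos hlam hρ).le] at h3
    have h4 : ‖vplus - (xplus + u)‖ ^ 2 ≤ (Real.sqrt n * Real.sqrt (lam * C / ρ)) ^ 2 := by
      rw [mul_pow, Real.sq_sqrt (Nat.cast_nonneg n), Real.sq_sqrt (by positivity)]
      calc ‖vplus - (xplus + u)‖ ^ 2 ≤ (n:ℝ) * (lam / ρ) * C := h3
        _ = (n:ℝ) * (lam * C / ρ) := by ring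
    nlinarith [norm_nonneg (vplus - (xplus + u)), Real.sqrt_nonneg (lam * C / ρ),
      Real.sqrt_nonneg (n:ℝ), mul_nonneg (Real.sqrt_nonneg (n:ℝ)) (Real.sqrt_nonneg (lam * C / ρ))]
  -- triangle inequality
  have htri : ‖vplus - v‖ ≤ ‖vplus - (xplus + u)‖ + ‖xplus - b‖ := by
    have : vplus - v = (vplus - (xplus + u)) + (xplus - b) := by
      rw [hb]; abel
    rw [this]; exact norm_add_le _ _
  have hfinal : ‖vplus - v‖ ≤ Real.sqrt n * Real.sqrt (lam * C / ρ) + L * Real.sqrt n / ρ :=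
    htri.trans (add_le_add hden hnormxb)
  rw [div_le_iff₀ hsn]
  calc ‖vplus - v‖ ≤ Real.sqrt n * Real.sqrt (lam * C / ρ) + L * Real.sqrt n / ρ := hfinal
    _ = (Real.sqrt (lam * C / ρ) + L / ρ) * Real.sqrt n := by ring
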